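/- For all n ≥ 2, the number of nonnesting permutations of the multiset {1,1,2,2,…,n,n} that avoid all three patterns 132, 213, and 312 equals n + 2. -/

import Mathlib

/-- `w` is a permutation of the multiset `{1,1,2,2,…,n,n}`:
a word in which every value in `{1,…,n}` occurs exactly twice
and no other value occurs. -/
def IsMultisetPerm (n : ℕ) (w : List ℕ) : Prop :=
  ∀ i : ℕ, w.count i = if 1 ≤ i ∧ i ≤ n then 2 else 0

/-- `t` is order-isomorphic to the word `σ`:
same length, and entries compare (both `<` and `=`) in the same way. -/
def OrderIsoWord (t σ : List ℕ) : Prop :=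
  t.length = σ.length ∧
  ∀ r s : ℕ, r < σ.length → s < σ.length →
    ((t.getD r 0 < t.getD s 0 ↔ σ.getD r 0 < σ.getD s 0) ∧
     (t.getD r 0 = t.getD s 0 ↔ σ.getD r 0 = σ.getD s 0))

/-- `w` contains the pattern `σ`: some subsequence of `w`
is order-isomorphic to `σ`. -/
def Contains (w σ : List ℕ) : Prop :=
  ∃ t : List ℕ, t.Sublist w ∧ OrderIsoWord t σ

/-- `w` avoids the pattern `σ`. -/
def Avoids (w σ : List ℕ) : Prop := ¬ Contains w σ

/-- `w` is a nonnesting permutation of `{1,1,2,2,…,n,n}`: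
it avoids the patterns `1221` and `2112`. -/
def IsNonnesting (n : ℕ) (w : List ℕ) : Prop :=
  IsMultisetPerm n w ∧ Avoids w [1,2,2,1] ∧ Avoids w [2,1,1,2]

lemma length_eq_four' {l : List ℕ} (h : l.length = 4) : ∃ a b c d, l = [a,b,c,d] := by
  obtain ⟨a,l,rfl⟩ := List.exists_cons_of_length_eq_add_one h
  obtain ⟨b,c,d,rfl⟩ := List.length_eq_three.1 (by simpa using h)
  exact ⟨a,b,c,d,rfl⟩

lemma contains132_iff (w : List ℕ) :
    Contains w [1,3,2] ↔ ∃ a b c, [a,b,c].Sublist w ∧ a < c ∧ c < b := by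
  constructor
  · rintro ⟨t, hsub, hlen, h⟩
    simp only [List.length_cons, List.length_nil] at hlen
    obtain ⟨a, b, c, rfl⟩ := List.length_eq_three.1 hlen
    exact ⟨a, b, c, hsub, by simpa using (h 0 2 (by norm_num) (by norm_num)).1,
      by simpa using (h 2 1 (by norm_num) (by norm_num)).1⟩
  · rintro ⟨a, b, c, hsub, h1, h2⟩
    refine ⟨[a,b,c], hsub, by simp, ?_⟩
    intro r s hr hs
    simp only [List.length_cons, List.length_nil] at hr hs
    interval_cases r <;> interval_cases s <;> constructor <;> simp <;> omega

lemma contains213_iff (w : List ℕ) :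
    Contains w [2,1,3] ↔ ∃ a b c, [a,b,c].Sublist w ∧ b < a ∧ a < c := by
  constructor
  · rintro ⟨t, hsub, hlen, h⟩
    simp only [List.length_cons, List.length_nil] at hlen
    obtain ⟨a, b, c, rfl⟩ := List.length_eq_three.1 hlen
    exact ⟨a, b, c, hsub, by simpa using (h 1 0 (by norm_num) (by norm_num)).1,
      by simpa using (h 0 2 (by norm_num) (by norm_num)).1⟩
  · rintro ⟨a, b, c, hsub, h1, h2⟩
    refine ⟨[a,b,c], hsub, by simp, ?_⟩
    intro r s hr hs
    simp only [List.length_cons, List.length_nil] at hr hs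
    interval_cases r <;> interval_cases s <;> constructor <;> simp <;> omega

lemma contains312_iff (w : List ℕ) :
    Contains w [3,1,2] ↔ ∃ a b c, [a,b,c].Sublist w ∧ b < c ∧ c < a := by
  constructor
  · rintro ⟨t, hsub, hlen, h⟩
    simp only [List.length_cons, List.length_nil] at hlen
    obtain ⟨a, b, c, rfl⟩ := List.length_eq_three.1 hlen
    exact ⟨a, b, c, hsub, by simpa using (h 1 2 (by norm_num) (by norm_num)).1,
      by simpa using (h 2 0 (by norm_num) (by norm_num)).1⟩
  · rintro ⟨a, b, c, hsub, h1, h2⟩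
    refine ⟨[a,b,c], hsub, by simp, ?_⟩
    intro r s hr hs
    simp only [List.length_cons, List.length_nil] at hr hs
    interval_cases r <;> interval_cases s <;> constructor <;> simp <;> omega

lemma contains1221_iff (w : List ℕ) :
    Contains w [1,2,2,1] ↔ ∃ a b, [a,b,b,a].Sublist w ∧ a < b := by
  constructor
  · rintro ⟨t, hsub, hlen, h⟩
    simp only [List.length_cons, List.length_nil] at hlen
    obtain ⟨a, b, c, d, rfl⟩ := length_eq_four' hlen
    have h1 : a < b := by simpa using (h 0 1 (by norm_num) (by norm_num)).1
    have h2 : b = c := by simpa using (h 1 2 (by norm_num) (by norm_num)).2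
    have h3 : d = a := by simpa using (h 3 0 (by norm_num) (by norm_num)).2
    rw [← h2, h3] at hsub
    exact ⟨a, b, hsub, h1⟩
  · rintro ⟨a, b, hsub, h1⟩
    refine ⟨[a,b,b,a], hsub, by simp, ?_⟩
    intro r s hr hs
    simp only [List.length_cons, List.length_nil] at hr hs
    interval_cases r <;> interval_cases s <;> constructor <;> simp <;> omega

lemma contains2112_iff (w : List ℕ) :
    Contains w [2,1,1,2] ↔ ∃ a b, [b,a,a,b].Sublist w ∧ a < b := by
  constructor
  · rintro ⟨t, hsub, hlen, h⟩
    simp only [List.length_cons, List.length_nil] at hlen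
    obtain ⟨a, b, c, d, rfl⟩ := length_eq_four' hlen
    have h1 : b < a := by simpa using (h 1 0 (by norm_num) (by norm_num)).1
    have h2 : b = c := by simpa using (h 1 2 (by norm_num) (by norm_num)).2
    have h3 : d = a := by simpa using (h 3 0 (by norm_num) (by norm_num)).2
    rw [← h2, h3] at hsub
    exact ⟨b, a, hsub, h1⟩
  · rintro ⟨a, b, hsub, h1⟩
    refine ⟨[b,a,a,b], hsub, by simp, ?_⟩
    intro r s hr hs
    simp only [List.length_cons, List.length_nil] at hr hs
    interval_cases r <;> interval_cases s <;> constructor <;> simp <;> omega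

def S (n : ℕ) : Set (List ℕ) := {w | IsNonnesting n w ∧
      Avoids w [1,3,2] ∧ Avoids w [2,1,3] ∧ Avoids w [3,1,2]}

lemma avoids_sublist {w u σ : List ℕ} (h : Avoids w σ) (hs : u.Sublist w) : Avoids u σ := by
  rintro ⟨t, ht, hi⟩; exact h ⟨t, ht.trans hs, hi⟩

lemma mem_S_bounds {n : ℕ} {w : List ℕ} (hw : w ∈ S n) {x : ℕ} (hx : x ∈ w) :
    1 ≤ x ∧ x ≤ n := by
  have h := hw.1.1 x
  have : 0 < w.count x := List.count_pos_iff.2 hx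
  by_contra hc
  rw [if_neg (by tauto)] at h
  omega

/-- a sorted word avoids all five patterns -/
lemma sorted_mem_S {n : ℕ} {w : List ℕ} (hm : IsMultisetPerm n w)
    (hs : w.Pairwise (· ≤ ·)) : w ∈ S n := by
  refine ⟨⟨hm, ?_, ?_⟩, ?_, ?_, ?_⟩
  · rw [Avoids, contains1221_iff]
    rintro ⟨a, b, hsub, hab⟩
    have := hs.sublist hsub
    simp [List.pairwise_cons] at this
    omega
  · rw [Avoids, contains2112_iff]
    rintro ⟨a, b, hsub, hab⟩
    have := hs.sublist hsub
    simp [List.pairwise_cons] at this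
    omega
  · rw [Avoids, contains132_iff]
    rintro ⟨a, b, c, hsub, h1, h2⟩
    have := hs.sublist hsub
    simp [List.pairwise_cons] at this
    omega
  · rw [Avoids, contains213_iff]
    rintro ⟨a, b, c, hsub, h1, h2⟩
    have := hs.sublist hsub
    simp [List.pairwise_cons] at this
    omega
  · rw [Avoids, contains312_iff]
    rintro ⟨a, b, c, hsub, h1, h2⟩
    have := hs.sublist hsub
    simp [List.pairwise_cons] at this
    omega

def idword : ℕ → List ℕ
  | 0 => []
  | n+1 => 1 :: 1 :: (idword n).map (· + 1)

lemma count_map_add_one (w : List ℕ) (i : ℕ) :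
    (w.map (· + 1)).count i = if i = 0 then 0 else w.count (i - 1) := by
  rcases eq_or_ne i 0 with rfl | h
  · rw [if_pos rfl]
    refine List.count_eq_zero.2 ?_
    simp
  · rw [if_neg h]
    conv_lhs => rw [show i = (i-1)+1 by omega]
    exact List.count_map_of_injective w (· + 1) (fun a b => by simp) _

lemma count_idword (n : ℕ) (i : ℕ) :
    (idword n).count i = if 1 ≤ i ∧ i ≤ n then 2 else 0 := by
  induction n generalizing i with
  | zero => simp only [idword, List.count_nil]; split <;> omega
  | succ n ih =>
    simp only [idword, List.count_cons, count_map_add_one, ih, beq_iff_eq]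
    split_ifs <;> omega

lemma mem_idword_ge_one {n : ℕ} {x : ℕ} (hx : x ∈ idword n) : 1 ≤ x := by
  induction n with
  | zero => simp [idword] at hx
  | succ n ih =>
    simp [idword] at hx
    rcases hx with h | h | ⟨y, hy, rfl⟩ <;> omega

lemma sorted_idword (n : ℕ) : (idword n).Pairwise (· ≤ ·) := by
  induction n with
  | zero => simp [idword]
  | succ n ih =>
    simp only [idword, List.pairwise_cons]
    refine ⟨?_, ?_, ?_⟩
    · intro b hb
      simp at hb
      rcases hb with h | ⟨y, hy, rfl⟩ <;> omega
    · intro b hb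
      simp at hb
      rcases hb with h | ⟨y, hy, rfl⟩ <;> omega
    · exact ih.map _ (fun h => by omega)

lemma getD_map_add_one (l : List ℕ) {r : ℕ} (h : r < l.length) :
    (l.map (· + 1)).getD r 0 = l.getD r 0 + 1 := by
  rw [List.getD_eq_getElem _ _ (by simpa using h), List.getD_eq_getElem _ _ h, List.getElem_map]

lemma orderIso_map_add_one_iff {t σ : List ℕ} :
    OrderIsoWord (t.map (· + 1)) σ ↔ OrderIsoWord t σ := by
  constructor
  · rintro ⟨h1, h2⟩
    rw [List.length_map] at h1
    refine ⟨h1, fun r s hr hs => ?_⟩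
    have e1 := (h2 r s hr hs).1
    have e2 := (h2 r s hr hs).2
    rw [getD_map_add_one t (by omega), getD_map_add_one t (by omega)] at e1 e2
    exact ⟨by omega, by omega⟩
  · rintro ⟨h1, h2⟩
    refine ⟨by simpa using h1, fun r s hr hs => ?_⟩
    have e1 := (h2 r s hr hs).1
    have e2 := (h2 r s hr hs).2
    rw [getD_map_add_one t (by omega), getD_map_add_one t (by omega)]
    exact ⟨by omega, by omega⟩

lemma contains_map_add_one_iff {w σ : List ℕ} :
    Contains (w.map (· + 1)) σ ↔ Contains w σ := by
  constructor
  · rintro ⟨t, hsub, hiso⟩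
    rw [List.sublist_map_iff] at hsub
    obtain ⟨t', hsub', rfl⟩ := hsub
    exact ⟨t', hsub', orderIso_map_add_one_iff.1 hiso⟩
  · rintro ⟨t, hsub, hiso⟩
    exact ⟨t.map (· + 1), hsub.map _, orderIso_map_add_one_iff.2 hiso⟩

lemma avoids_map_add_one_iff {w σ : List ℕ} :
    Avoids (w.map (· + 1)) σ ↔ Avoids w σ := not_congr contains_map_add_one_iff

lemma sublist_pair11 {t : List ℕ} (h : t.Sublist [1,1]) : t = [] ∨ t = [1] ∨ t = [1,1] := by
  rw [List.sublist_cons_iff] at h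
  rcases h with h | ⟨r, rfl, hr⟩
  · rw [List.sublist_cons_iff] at h
    rcases h with h | ⟨r, rfl, hr⟩
    · simp at h; tauto
    · simp at hr; subst hr; tauto
  · rw [List.sublist_cons_iff] at hr
    rcases hr with h | ⟨r', rfl, hr⟩
    · simp at h; subst h; tauto
    · simp at hr; subst hr; tauto

lemma eq3_append1 {a b c : ℕ} {t₁ : List ℕ} (heq : [a,b,c] = t₁ ++ [1]) : t₁ = [a,b] ∧ c = 1 := by
  have hl : t₁.length = 2 := by have := congrArg List.length heq; simp at this; omega
  obtain ⟨x, y, rfl⟩ := List.length_eq_two.1 hl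
  simp only [List.cons_append, List.nil_append, List.cons.injEq, List.nil_eq] at heq
  obtain ⟨rfl, rfl, rfl, -⟩ := heq
  exact ⟨rfl, rfl⟩
lemma eq3_append2 {a b c : ℕ} {t₁ : List ℕ} (heq : [a,b,c] = t₁ ++ [1,1]) : t₁ = [a] ∧ b = 1 ∧ c = 1 := by
  have hl : t₁.length = 1 := by have := congrArg List.length heq; simp at this; omega
  obtain ⟨x, rfl⟩ := List.length_eq_one_iff.1 hl
  simp only [List.cons_append, List.nil_append, List.cons.injEq, List.nil_eq] at heq
  obtain ⟨rfl, rfl, rfl, -⟩ := heq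
  exact ⟨rfl, rfl, rfl⟩
lemma eq4_append1 {a b c d : ℕ} {t₁ : List ℕ} (heq : [a,b,c,d] = t₁ ++ [1]) : t₁ = [a,b,c] ∧ d = 1 := by
  have hl : t₁.length = 3 := by have := congrArg List.length heq; simp at this; omega
  obtain ⟨x, y, z, rfl⟩ := List.length_eq_three.1 hl
  simp only [List.cons_append, List.nil_append, List.cons.injEq, List.nil_eq] at heq
  obtain ⟨rfl, rfl, rfl, rfl, -⟩ := heq
  exact ⟨rfl, rfl⟩
lemma eq4_append2 {a b c d : ℕ} {t₁ : List ℕ} (heq : [a,b,c,d] = t₁ ++ [1,1]) : t₁ = [a,b] ∧ c = 1 ∧ d = 1 := by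
  have hl : t₁.length = 2 := by have := congrArg List.length heq; simp at this; omega
  obtain ⟨x, y, rfl⟩ := List.length_eq_two.1 hl
  simp only [List.cons_append, List.nil_append, List.cons.injEq, List.nil_eq] at heq
  obtain ⟨rfl, rfl, rfl, rfl, -⟩ := heq
  exact ⟨rfl, rfl, rfl⟩

def F (w : List ℕ) : List ℕ := w.map (· + 1) ++ [1,1]

lemma mem_map_ge_two {u : List ℕ} (hu : ∀ y ∈ u, 1 ≤ y) {x : ℕ}
    (hx : x ∈ u.map (· + 1)) : 2 ≤ x := by
  simp only [List.mem_map] at hx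
  obtain ⟨y, hy, rfl⟩ := hx
  have := hu y hy
  omega

lemma F_mem_S {n : ℕ} {u : List ℕ} (hu : u ∈ S n) : F u ∈ S (n + 1) := by
  obtain ⟨⟨hcount, h1221, h2112⟩, h132, h213, h312⟩ := hu
  have hge : ∀ y ∈ u, 1 ≤ y := fun y hy =>
    (mem_S_bounds ⟨⟨hcount, h1221, h2112⟩, h132, h213, h312⟩ hy).1
  have hmem : ∀ x ∈ u.map (· + 1), 2 ≤ x := fun x hx => mem_map_ge_two hge hx
  refine ⟨⟨?_, ?_, ?_⟩, ?_, ?_, ?_⟩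
  · intro i
    rw [F, List.count_append, count_map_add_one, hcount]
    simp only [List.count_cons, List.count_nil, beq_iff_eq]
    split_ifs <;> omega
  · rw [Avoids, contains1221_iff]
    rintro ⟨a, b, hsub, hab⟩
    rw [F, List.sublist_append_iff] at hsub
    obtain ⟨t₁, t₂, heq, hs1, hs2⟩ := hsub
    rcases sublist_pair11 hs2 with rfl | rfl | rfl
    · rw [List.append_nil] at heq; subst heq
      exact (avoids_map_add_one_iff.2 h1221) ((contains1221_iff _).2 ⟨a, b, hs1, hab⟩)
    · obtain ⟨rfl, ha⟩ := eq4_append1 heq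
      have := hmem a (hs1.subset (by simp))
      omega
    · obtain ⟨rfl, hb, ha⟩ := eq4_append2 heq
      omega
  · rw [Avoids, contains2112_iff]
    rintro ⟨a, b, hsub, hab⟩
    rw [F, List.sublist_append_iff] at hsub
    obtain ⟨t₁, t₂, heq, hs1, hs2⟩ := hsub
    rcases sublist_pair11 hs2 with rfl | rfl | rfl
    · rw [List.append_nil] at heq; subst heq
      exact (avoids_map_add_one_iff.2 h2112) ((contains2112_iff _).2 ⟨a, b, hs1, hab⟩)
    · obtain ⟨rfl, hb⟩ := eq4_append1 heq
      have := hmem b (hs1.subset (by simp))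
      omega
    · obtain ⟨rfl, ha, hb⟩ := eq4_append2 heq
      omega
  · rw [Avoids, contains132_iff]
    rintro ⟨a, b, c, hsub, hac, hcb⟩
    rw [F, List.sublist_append_iff] at hsub
    obtain ⟨t₁, t₂, heq, hs1, hs2⟩ := hsub
    rcases sublist_pair11 hs2 with rfl | rfl | rfl
    · rw [List.append_nil] at heq; subst heq
      exact (avoids_map_add_one_iff.2 h132) ((contains132_iff _).2 ⟨a, b, c, hs1, hac, hcb⟩)
    · obtain ⟨rfl, hc⟩ := eq3_append1 heq
      have := hmem a (hs1.subset (by simp))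
      omega
    · obtain ⟨rfl, hb, hc⟩ := eq3_append2 heq
      omega
  · rw [Avoids, contains213_iff]
    rintro ⟨a, b, c, hsub, hba, hac⟩
    rw [F, List.sublist_append_iff] at hsub
    obtain ⟨t₁, t₂, heq, hs1, hs2⟩ := hsub
    rcases sublist_pair11 hs2 with rfl | rfl | rfl
    · rw [List.append_nil] at heq; subst heq
      exact (avoids_map_add_one_iff.2 h213) ((contains213_iff _).2 ⟨a, b, c, hs1, hba, hac⟩)
    · obtain ⟨rfl, hc⟩ := eq3_append1 heq
      have := hmem a (hs1.subset (by simp))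
      omega
    · obtain ⟨rfl, hb, hc⟩ := eq3_append2 heq
      omega
  · rw [Avoids, contains312_iff]
    rintro ⟨a, b, c, hsub, hbc, hca⟩
    rw [F, List.sublist_append_iff] at hsub
    obtain ⟨t₁, t₂, heq, hs1, hs2⟩ := hsub
    rcases sublist_pair11 hs2 with rfl | rfl | rfl
    · rw [List.append_nil] at heq; subst heq
      exact (avoids_map_add_one_iff.2 h312) ((contains312_iff _).2 ⟨a, b, c, hs1, hbc, hca⟩)
    · obtain ⟨rfl, hc⟩ := eq3_append1 heq
      have := hmem b (hs1.subset (by simp))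
      omega
    · obtain ⟨rfl, hb, hc⟩ := eq3_append2 heq
      omega

lemma count_one_split {l : List ℕ} {a : ℕ} (h : l.count a = 1) :
    ∃ u v, l = u ++ a :: v ∧ a ∉ u ∧ a ∉ v := by
  induction l with
  | nil => simp at h
  | cons b l ih =>
    rcases eq_or_ne a b with heq' | hne
    · subst heq'
      rw [List.count_cons_self] at h
      have hz : a ∉ l := by rw [← List.count_eq_zero]; omega
      exact ⟨[], l, rfl, by simp, hz⟩
    · rw [List.count_cons_of_ne (Ne.symm hne)] at h
      obtain ⟨u, v, rfl, hu, hv⟩ := ih h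
      exact ⟨b :: u, v, rfl, by simp [hu]; exact hne, hv⟩

lemma count_two_split {l : List ℕ} {a : ℕ} (h : l.count a = 2) :
    ∃ u v z, l = u ++ a :: v ++ a :: z ∧ a ∉ u ∧ a ∉ v ∧ a ∉ z := by
  induction l with
  | nil => simp at h
  | cons b l ih =>
    rcases eq_or_ne a b with heq' | hne
    · subst heq'
      rw [List.count_cons_self] at h
      obtain ⟨v, z, rfl, hv, hz⟩ := count_one_split (show List.count a l = 1 by omega)
      exact ⟨[], v, z, rfl, by simp, hv, hz⟩
    · rw [List.count_cons_of_ne (Ne.symm hne)] at h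
      obtain ⟨u, v, z, rfl, hu, hv, hz⟩ := ih h
      exact ⟨b :: u, v, z, rfl, by simp [hu]; exact hne, hv, hz⟩

lemma peel {n : ℕ} {u : List ℕ} (h2 : ∀ x ∈ u, 2 ≤ x)
    (hS : u ++ [1,1] ∈ S (n+1)) : ∃ u', u' ∈ S n ∧ u ++ [1,1] = F u' := by
  refine ⟨u.map (· - 1), ?_, ?_⟩
  swap
  · rw [F, List.map_map]
    congr 1
    rw [show ((fun x => x + 1) ∘ fun x => x - 1) = fun x : ℕ => x - 1 + 1 from rfl]
    rw [List.map_congr_left (fun x hx => show x - 1 + 1 = id x by have := h2 x hx; simp; omega)]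
    simp
  · have hmap : (u.map (· - 1)).map (· + 1) = u := by
      rw [List.map_map]
      rw [show ((fun x => x + 1) ∘ fun x => x - 1) = fun x : ℕ => x - 1 + 1 from rfl]
      rw [List.map_congr_left (fun x hx => show x - 1 + 1 = id x by have := h2 x hx; simp; omega)]
      simp
    have husub : u.Sublist (u ++ [1,1]) := List.sublist_append_left _ _
    obtain ⟨⟨hcount, h1221, h2112⟩, h132, h213, h312⟩ := hS
    refine ⟨⟨?_, ?_, ?_⟩, ?_, ?_, ?_⟩
    · intro i
      rcases Nat.eq_zero_or_pos i with rfl | hi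
      · rw [if_neg (by omega), List.count_eq_zero]
        simp only [List.mem_map, not_exists]
        rintro x ⟨hx, hx0⟩
        have := h2 x hx
        omega
      · have e1 : (u.map (· - 1)).count i = u.count (i+1) := by
          conv_rhs => rw [← hmap]
          rw [count_map_add_one]
          simp
        have e2 := hcount (i+1)
        rw [List.count_append] at e2
        have e3 : List.count (i+1) [1,1] = 0 := by
          simp only [List.count_cons, List.count_nil, beq_iff_eq]
          split_ifs <;> omega
        rw [e1]
        split_ifs with hcond
        · rw [if_pos (by omega)] at e2; omega
        · rw [if_neg (by omega)] at e2; omega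
    · exact avoids_map_add_one_iff.1 (by rw [hmap]; exact avoids_sublist h1221 husub)
    · exact avoids_map_add_one_iff.1 (by rw [hmap]; exact avoids_sublist h2112 husub)
    · exact avoids_map_add_one_iff.1 (by rw [hmap]; exact avoids_sublist h132 husub)
    · exact avoids_map_add_one_iff.1 (by rw [hmap]; exact avoids_sublist h213 husub)
    · exact avoids_map_add_one_iff.1 (by rw [hmap]; exact avoids_sublist h312 husub)

lemma two_letter_contra {n : ℕ} (hn : 2 ≤ n) {w : List ℕ} (hw : w ∈ S (n+1)) {p : ℕ}
    (hall : ∀ x ∈ w, x = 1 ∨ x = p) : False := by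
  set c := if p = 2 then 3 else 2 with hc
  have hcb : 2 ≤ c ∧ c ≤ 3 ∧ c ≠ p := by rw [hc]; split_ifs <;> omega
  have h1 : List.count c w = 2 := by rw [hw.1.1 c, if_pos (by omega)]
  have h2 : List.count c w = 0 := by
    rw [List.count_eq_zero]
    intro hc'
    rcases hall c hc' with h | h <;> omega
  omega

lemma classify {n : ℕ} (hn : 2 ≤ n) {w : List ℕ} (hw : w ∈ S (n+1)) :
    w = idword (n+1) ∨ ∃ u, u ∈ S n ∧ w = F u := by
  have no132 : ∀ a b c : ℕ, [a,b,c].Sublist w → ¬(a < c ∧ c < b) :=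
    fun a b c hs h => hw.2.1 ((contains132_iff w).2 ⟨a,b,c,hs,h.1,h.2⟩)
  have no213 : ∀ a b c : ℕ, [a,b,c].Sublist w → ¬(b < a ∧ a < c) :=
    fun a b c hs h => hw.2.2.1 ((contains213_iff w).2 ⟨a,b,c,hs,h.1,h.2⟩)
  have no312 : ∀ a b c : ℕ, [a,b,c].Sublist w → ¬(b < c ∧ c < a) :=
    fun a b c hs h => hw.2.2.2 ((contains312_iff w).2 ⟨a,b,c,hs,h.1,h.2⟩)
  have no1221 : ∀ a b : ℕ, [a,b,b,a].Sublist w → ¬(a < b) :=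
    fun a b hs h => hw.1.2.1 ((contains1221_iff w).2 ⟨a,b,hs,h⟩)
  have no2112 : ∀ a b : ℕ, [b,a,a,b].Sublist w → ¬(a < b) :=
    fun a b hs h => hw.1.2.2 ((contains2112_iff w).2 ⟨a,b,hs,h⟩)
  have hbounds : ∀ x ∈ w, 1 ≤ x ∧ x ≤ n+1 := fun x hx => mem_S_bounds hw hx
  have hc1 : w.count 1 = 2 := by rw [hw.1.1 1, if_pos (by omega)]
  obtain ⟨u, v, z, hwe, hu1, hv1, hz1⟩ := count_two_split hc1
  have hu2 : ∀ x ∈ u, 2 ≤ x := by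
    intro x hx
    have h := (hbounds x (by rw [hwe]; simp [hx])).1
    have : x ≠ 1 := fun h' => hu1 (h' ▸ hx)
    omega
  have hv2 : ∀ x ∈ v, 2 ≤ x := by
    intro x hx
    have h := (hbounds x (by rw [hwe]; simp [hx])).1
    have : x ≠ 1 := fun h' => hv1 (h' ▸ hx)
    omega
  have hz2 : ∀ x ∈ z, 2 ≤ x := by
    intro x hx
    have h := (hbounds x (by rw [hwe]; simp [hx])).1
    have : x ≠ 1 := fun h' => hz1 (h' ▸ hx)
    omega
  -- sublist constructions
  have sub_uv : ∀ {x y : ℕ}, x ∈ u → y ∈ v → [x,1,y].Sublist w := by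
    intro x y hx hy
    rw [hwe]
    have h1 : ([x] ++ [1,y]).Sublist (u ++ (1::v)) :=
      (List.singleton_sublist.2 hx).append ((List.singleton_sublist.2 hy).cons₂ 1)
    simpa using h1.append (List.nil_sublist (1::z))
  have sub_uz : ∀ {x y : ℕ}, x ∈ u → y ∈ z → [x,1,y].Sublist w := by
    intro x y hx hy
    rw [hwe]
    have h1 : ([x] ++ [1]).Sublist (u ++ (1::v)) :=
      (List.singleton_sublist.2 hx).append ((List.nil_sublist v).cons₂ 1)
    simpa using h1.append ((List.singleton_sublist.2 hy).cons 1)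
  have sub_vz : ∀ {x y : ℕ}, x ∈ v → y ∈ z → [x,1,y].Sublist w := by
    intro x y hx hy
    rw [hwe]
    have h1 : ([x] ++ [1,y]).Sublist ((1::v) ++ (1::z)) :=
      ((List.singleton_sublist.2 hx).cons 1).append ((List.singleton_sublist.2 hy).cons₂ 1)
    have h2 : (([] : List ℕ) ++ ([x] ++ [1,y])).Sublist ((u ++ (1::v)) ++ (1::z)) := by
      rw [List.append_assoc]
      exact (List.nil_sublist u).append h1
    simpa using h2
  have sub_uzz : ∀ {x : ℕ}, x ∈ u → x ∈ z → [x,1,1,x].Sublist w := by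
    intro x hx hz'
    rw [hwe]
    have h1 : ([x] ++ [1]).Sublist (u ++ (1::v)) :=
      (List.singleton_sublist.2 hx).append ((List.nil_sublist v).cons₂ 1)
    simpa using h1.append ((List.singleton_sublist.2 hz').cons₂ 1)
  have sub_vpair : ∀ {p q : ℕ}, [p,q].Sublist v → [1,p,q,1].Sublist w := by
    intro p q hpq
    rw [hwe]
    have h1 : ([1,p,q] ++ [1]).Sublist ((1::v) ++ (1::z)) :=
      (hpq.cons₂ 1).append ((List.nil_sublist z).cons₂ 1)
    have h2 : (([] : List ℕ) ++ ([1,p,q] ++ [1])).Sublist ((u ++ (1::v)) ++ (1::z)) := by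
      rw [List.append_assoc]
      exact (List.nil_sublist u).append h1
    simpa using h2
  have sub_zpair : ∀ {p q : ℕ}, [p,q].Sublist z → [1,p,q].Sublist w := by
    intro p q hpq
    rw [hwe]
    have h1 : ([1] ++ [p,q]).Sublist ((1::v) ++ (1::z)) :=
      ((List.nil_sublist v).cons₂ 1).append (hpq.cons 1)
    have h2 : (([] : List ℕ) ++ ([1] ++ [p,q])).Sublist ((u ++ (1::v)) ++ (1::z)) := by
      rw [List.append_assoc]
      exact (List.nil_sublist u).append h1
    simpa using h2
  have E : ∀ {x y : ℕ}, [x,1,y].Sublist w → 2 ≤ x → 2 ≤ y → x = y := by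
    intro x y hs hx hy
    have h1 := no213 x 1 y hs
    have h2 := no312 x 1 y hs
    omega
  rcases eq_or_ne u [] with rfl | hune
  · rcases eq_or_ne v [] with rfl | hvne
    · -- w = [1,1] ++ z, sorted
      left
      have hzsorted : z.Pairwise (· ≤ ·) := by
        rw [List.pairwise_iff_forall_sublist]
        intro p q hpq
        by_contra hlt
        push_neg at hlt
        have hq2 : 2 ≤ q := hz2 q (hpq.subset (by simp))
        exact no132 1 p q (sub_zpair hpq) ⟨by omega, by omega⟩
      have hwsorted : w.Pairwise (· ≤ ·) := by
        rw [hwe]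
        simp only [List.cons_append, List.nil_append]
        rw [List.pairwise_cons, List.pairwise_cons]
        refine ⟨?_, ?_, hzsorted⟩
        · intro b hb
          rcases List.mem_cons.1 hb with rfl | hb'
          · omega
          · have := hz2 b hb'; omega
        · intro b hb
          have := hz2 b hb; omega
      have hperm : w.Perm (idword (n+1)) :=
        List.perm_iff_count.2 (fun a => by rw [hw.1.1 a, count_idword])
      exact List.Perm.eq_of_pairwise (fun a b _ _ h1 h2 => le_antisymm h1 h2) hwsorted (sorted_idword _) hperm
    · exfalso
      have hdistinct : ∀ p q : ℕ, [p,q].Sublist v → p ≠ q := by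
        intro p q hpq heq
        subst heq
        exact no1221 1 p (sub_vpair hpq)
          (by have := hv2 p (hpq.subset (by simp)); omega)
      rcases eq_or_ne z [] with rfl | hzne
      · have hc2 : List.count 2 w = 2 := by rw [hw.1.1 2, if_pos (by omega)]
        have hcv : List.count 2 v = 2 := by
          rw [hwe] at hc2
          simpa using hc2
        have hrep : [2,2].Sublist v := by
          have h := List.replicate_sublist_iff.2 (le_of_eq hcv.symm)
          simpa using h
        exact hdistinct 2 2 hrep rfl
      · obtain ⟨y₁, hy₁⟩ := List.exists_mem_of_ne_nil z hzne
        have hvall : ∀ x ∈ v, x = y₁ := fun x hx =>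
          E (sub_vz hx hy₁) (hv2 x hx) (hz2 y₁ hy₁)
        rcases v with _ | ⟨p, _ | ⟨q, rest⟩⟩
        · exact hvne rfl
        · -- v = [p]
          have hp : p = y₁ := hvall p (by simp)
          have hzall : ∀ x ∈ z, x = p := fun x hx =>
            (E (sub_vz (by simp) hx) (hv2 p (by simp)) (hz2 x hx)).symm
          apply two_letter_contra hn hw (p := p)
          intro x hx
          rw [hwe] at hx
          simp at hx
          rcases hx with rfl | rfl | rfl | hx'
          · exact Or.inl rfl
          · exact Or.inr rfl
          · exact Or.inl rfl
          · exact Or.inr (hzall x hx')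
        · have h1 : p = y₁ := hvall p (by simp)
          have h2 : q = y₁ := hvall q (by simp)
          exact hdistinct p q (((List.nil_sublist rest).cons₂ q).cons₂ p) (by omega)
  · obtain ⟨x₀, hx₀⟩ := List.exists_mem_of_ne_nil u hune
    have hzempty : z = [] := by
      rcases eq_or_ne z [] with h | hzne
      · exact h
      exfalso
      obtain ⟨y₁, hy₁⟩ := List.exists_mem_of_ne_nil z hzne
      have hx : x₀ = y₁ := E (sub_uz hx₀ hy₁) (hu2 _ hx₀) (hz2 _ hy₁)
      exact no2112 1 x₀ (sub_uzz hx₀ (hx ▸ hy₁)) (by have := hu2 _ hx₀; omega)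
    subst hzempty
    rcases eq_or_ne v [] with rfl | hvne
    · right
      have hwu : w = u ++ [1,1] := by rw [hwe]; simp
      obtain ⟨u', hu', heq⟩ := peel hu2 (by rw [← hwu]; exact hw)
      exact ⟨u', hu', by rw [hwu, heq]⟩
    · exfalso
      obtain ⟨y₀, hy₀⟩ := List.exists_mem_of_ne_nil v hvne
      have huall : ∀ x ∈ u, x = y₀ := fun x hx =>
        E (sub_uv hx hy₀) (hu2 x hx) (hv2 y₀ hy₀)
      have hvall : ∀ x ∈ v, x = y₀ := fun x hx =>
        ((E (sub_uv hx₀ hx) (hu2 x₀ hx₀) (hv2 x hx)).symm).trans (huall x₀ hx₀)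
      apply two_letter_contra hn hw (p := y₀)
      intro x hx
      rw [hwe] at hx
      simp at hx
      rcases hx with hx' | rfl | hx' | rfl
      · exact Or.inr (huall x hx')
      · exact Or.inl rfl
      · exact Or.inr (hvall x hx')
      · exact Or.inl rfl

lemma avoid3_of_two_values {w : List ℕ} (h : ∀ x ∈ w, x = 1 ∨ x = 2) :
    Avoids w [1,3,2] ∧ Avoids w [2,1,3] ∧ Avoids w [3,1,2] := by
  refine ⟨?_, ?_, ?_⟩
  · rw [Avoids, contains132_iff]
    rintro ⟨a, b, c, hs, h1, h2⟩
    have ha := h a (hs.subset (by simp))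
    have hb := h b (hs.subset (by simp))
    have hc := h c (hs.subset (by simp))
    omega
  · rw [Avoids, contains213_iff]
    rintro ⟨a, b, c, hs, h1, h2⟩
    have ha := h a (hs.subset (by simp))
    have hb := h b (hs.subset (by simp))
    have hc := h c (hs.subset (by simp))
    omega
  · rw [Avoids, contains312_iff]
    rintro ⟨a, b, c, hs, h1, h2⟩
    have ha := h a (hs.subset (by simp))
    have hb := h b (hs.subset (by simp))
    have hc := h c (hs.subset (by simp))
    omega

lemma mem_S_two_of_word {w : List ℕ}
    (hmem : ∀ x ∈ w, x = 1 ∨ x = 2)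
    (hcnt : ∀ i : ℕ, w.count i = if 1 ≤ i ∧ i ≤ 2 then 2 else 0)
    (h1221 : ¬ ([1,2,2,1] : List ℕ).Sublist w)
    (h2112 : ¬ ([2,1,1,2] : List ℕ).Sublist w) : w ∈ S 2 := by
  obtain ⟨a132, a213, a312⟩ := avoid3_of_two_values hmem
  refine ⟨⟨hcnt, ?_, ?_⟩, a132, a213, a312⟩
  · rw [Avoids, contains1221_iff]
    rintro ⟨a, b, hs, hab⟩
    have ha := hmem a (hs.subset (by simp))
    have hb := hmem b (hs.subset (by simp))
    have : a = 1 ∧ b = 2 := by omega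
    obtain ⟨rfl, rfl⟩ := this
    exact h1221 hs
  · rw [Avoids, contains2112_iff]
    rintro ⟨a, b, hs, hab⟩
    have ha := hmem a (hs.subset (by simp))
    have hb := hmem b (hs.subset (by simp))
    have : a = 1 ∧ b = 2 := by omega
    obtain ⟨rfl, rfl⟩ := this
    exact h2112 hs

lemma S_two : S 2 = {[1,1,2,2],[1,2,1,2],[2,1,2,1],[2,2,1,1]} := by
  ext w
  simp only [Set.mem_insert_iff, Set.mem_singleton_iff]
  constructor
  · intro hw
    have hperm : w.Perm [1,1,2,2] := List.perm_iff_count.2 (fun a => by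
      rw [hw.1.1 a]
      simp only [List.count_cons, List.count_nil, beq_iff_eq]
      split_ifs <;> omega)
    have hlen : w.length = 4 := by rw [hperm.length_eq]; rfl
    obtain ⟨a,b,c,d,rfl⟩ := length_eq_four' hlen
    have hmem : ∀ x ∈ ([a,b,c,d] : List ℕ), x = 1 ∨ x = 2 := by
      intro x hx
      have := mem_S_bounds hw hx
      omega
    have h1 : List.count 1 [a,b,c,d] = 2 := by rw [hw.1.1 1]; norm_num
    have h2 : List.count 2 [a,b,c,d] = 2 := by rw [hw.1.1 2]; norm_num
    have no1221' : ¬ ([1,2,2,1] : List ℕ).Sublist [a,b,c,d] :=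
      fun hs => hw.1.2.1 ((contains1221_iff _).2 ⟨1,2,hs,one_lt_two⟩)
    have no2112' : ¬ ([2,1,1,2] : List ℕ).Sublist [a,b,c,d] :=
      fun hs => hw.1.2.2 ((contains2112_iff _).2 ⟨1,2,hs,one_lt_two⟩)
    rcases hmem a (by simp) with rfl | rfl <;> rcases hmem b (by simp) with rfl | rfl <;>
      rcases hmem c (by simp) with rfl | rfl <;> rcases hmem d (by simp) with rfl | rfl <;>
      first
        | exact (no1221' (List.Sublist.refl _)).elim
        | exact (no2112' (List.Sublist.refl _)).elim
        | tauto
  · intro hw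
    have key : ∀ i : ℕ, (if 1 ≤ i ∧ i ≤ 2 then 2 else 0) =
        List.count i [1,1,2,2] := by
      intro i
      simp only [List.count_cons, List.count_nil, beq_iff_eq]
      split_ifs <;> omega
    rcases hw with rfl | rfl | rfl | rfl <;>
      refine mem_S_two_of_word (by intro x hx; simp at hx; omega) (fun i => ?_) (by decide) (by decide) <;>
      rw [key i] <;> refine List.Perm.count_eq ?_ i <;> decide

lemma F_inj : Function.Injective F := by
  intro a b h
  rw [F, F] at h
  have h2 := List.append_cancel_right h
  exact List.map_injective_iff.2 (fun x y hxy => by omega) h2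

lemma idword_mem_S (n : ℕ) : idword n ∈ S n :=
  sorted_mem_S (fun i => count_idword n i) (sorted_idword n)

lemma idword_not_mem_image {n : ℕ} (hn : 1 ≤ n) : idword (n+1) ∉ F '' S n := by
  rintro ⟨u, hu, heq⟩
  have h1mem : (1:ℕ) ∈ u := by
    have h := hu.1.1 1
    rw [if_pos (by omega)] at h
    exact List.count_pos_iff.1 (by omega)
  rcases u with _ | ⟨x, t⟩
  · simp at h1mem
  · have hx : 1 ≤ x := (mem_S_bounds hu (by simp)).1
    rw [F] at heq
    simp only [List.map_cons, List.cons_append, idword, List.cons.injEq] at heq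
    obtain ⟨h1, -⟩ := heq
    omega

lemma S_succ {n : ℕ} (hn : 2 ≤ n) : S (n+1) = insert (idword (n+1)) (F '' S n) := by
  ext w
  constructor
  · intro hw
    rcases classify hn hw with h | ⟨u, hu, rfl⟩
    · exact Or.inl h
    · exact Set.mem_insert_of_mem _ ⟨u, hu, rfl⟩
  · intro hw
    rcases hw with rfl | ⟨u, hu, rfl⟩
    · exact idword_mem_S (n+1)
    · exact F_mem_S hu

lemma S_ncard : ∀ m : ℕ, 2 ≤ m → (S m).ncard = m + 2 := by
  intro m hm
  induction m, hm using Nat.le_induction with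
  | base =>
    rw [S_two]
    rw [Set.ncard_insert_of_notMem (by simp), Set.ncard_insert_of_notMem (by simp),
        Set.ncard_insert_of_notMem (by simp), Set.ncard_singleton]
  | succ n hn ih =>
    have hfin : (S n).Finite := Set.finite_of_ncard_ne_zero (by omega)
    rw [S_succ hn,
        Set.ncard_insert_of_notMem (idword_not_mem_image (by omega)) (hfin.image F),
        Set.ncard_image_of_injOn F_inj.injOn, ih]

theorem nonnesting_avoid_132_213_312 (n : ℕ) (hn : 2 ≤ n) :
    {w : List ℕ | IsNonnesting n w ∧
      Avoids w [1,3,2] ∧ Avoids w [2,1,3] ∧ Avoids w [3,1,2]}.ncard = n + 2 := by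
  exact S_ncard n hn
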